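/- For every real number y and every real x with |x| ≤ 1, the series ∑_{k=1}^∞ (−1)^{k−1} (y + 1/(2k−1)) x^{2k} / (k(2k−1)) converges and equals (y − 1)·( 2x·arctan x − log(1 + x²) ) + 2x·∫₀^x (arctan w)/w dw, where the integrand (arctan w)/w is understood to take the value 1 at w = 0. -/

import Mathlib

open Real MeasureTheory intervalIntegral

private lemma aux_summable : Summable (fun k : ℕ => 1 / ((k : ℝ) + 1) ^ 2) := by
  have h : Summable (fun n : ℕ => 1 / (n : ℝ) ^ 2) :=
    Real.summable_one_div_nat_pow.2 one_lt_two
  have := (summable_nat_add_iff 1).2 h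
  simpa using this

private lemma aux_ae_ne_one : ∀ᵐ u : ℝ, u ≠ (1 : ℝ) := by
  have : (volume : Measure ℝ) {(1:ℝ)} = 0 := Real.volume_singleton
  simpa using measure_eq_zero_iff_ae_notMem.1 this

private lemma aux_piece2 {x : ℝ} (hx : |x| ≤ 1) (hx0 : x ≠ 0) :
    HasSum (fun k : ℕ => (-1) ^ k * x ^ (2 * k + 1) / ((2 * (k : ℝ) + 1) * (2 * (k : ℝ) + 1)))
      (∫ w in (0 : ℝ)..x, if w = 0 then 1 else Real.arctan w / w) := by
  set g : ℝ → ℝ := fun w => if w = 0 then 1 else Real.arctan w / w with hg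
  set F : ℕ → ℝ → ℝ := fun k u => ((-1) ^ k * x ^ (2 * k + 1) / (2 * (k : ℝ) + 1)) * u ^ (2 * k)
    with hF
  have hFint : ∀ k, Integrable (F k) (volume.restrict (Set.Ioc (0:ℝ) 1)) := fun k =>
    (Continuous.integrableOn_Ioc (by fun_prop))
  have hFsum : Summable (fun k : ℕ => ∫ u in Set.Ioc (0:ℝ) 1, ‖F k u‖) := by
    apply Summable.of_nonneg_of_le (fun k => integral_nonneg (fun u => norm_nonneg _))
      (fun k => ?_) aux_summable
    have h1 : ∫ u in Set.Ioc (0:ℝ) 1, ‖F k u‖ ≤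
        ∫ u in Set.Ioc (0:ℝ) 1, (1 / (2 * (k : ℝ) + 1)) * u ^ (2 * k) := by
      apply setIntegral_mono_on (hFint k).norm
        (Continuous.integrableOn_Ioc (by fun_prop)) measurableSet_Ioc
      intro u hu
      have hxp : |x| ^ (2 * k + 1) ≤ 1 := pow_le_one₀ (abs_nonneg x) hx
      have hnorm : ‖F k u‖ = |x| ^ (2 * k + 1) / (2 * (k : ℝ) + 1) * u ^ (2 * k) := by
        rw [hF]
        simp only [norm_mul, norm_div, norm_pow, Real.norm_eq_abs]
        rw [abs_of_pos hu.1]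
        have h3 : |(-1 : ℝ)| = 1 := by norm_num
        have h2 : |2 * (k : ℝ) + 1| = 2 * (k : ℝ) + 1 := abs_of_pos (by positivity)
        rw [h3, h2]; ring
      rw [hnorm]
      have hub : (0:ℝ) ≤ u ^ (2 * k) := pow_nonneg hu.1.le _
      have hc : |x| ^ (2 * k + 1) / (2 * (k : ℝ) + 1) ≤ 1 / (2 * (k : ℝ) + 1) := by
        gcongr <;> first | exact hxp | positivity
      exact mul_le_mul_of_nonneg_right hc hub
    refine h1.trans ?_
    rw [← intervalIntegral.integral_of_le zero_le_one, intervalIntegral.integral_const_mul,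
      integral_pow, one_pow, zero_pow (by omega : 2 * k + 1 ≠ 0)]
    push_cast
    rw [sub_zero, div_mul_div_comm, one_mul]
    rw [div_le_div_iff₀ (by positivity) (by positivity)]
    nlinarith [(Nat.cast_nonneg k : (0:ℝ) ≤ (k:ℝ))]
  have key := MeasureTheory.hasSum_integral_of_summable_integral_norm hFint hFsum
  have hint : ∀ k : ℕ, (∫ u in Set.Ioc (0:ℝ) 1, F k u) =
      (-1) ^ k * x ^ (2 * k + 1) / ((2 * (k : ℝ) + 1) * (2 * (k : ℝ) + 1)) := by
    intro k
    rw [← intervalIntegral.integral_of_le zero_le_one, hF]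
    simp only []
    rw [intervalIntegral.integral_const_mul, integral_pow, one_pow,
      zero_pow (by omega : 2 * k + 1 ≠ 0)]
    push_cast
    field_simp
    try ring
  have htsum : (∫ u in Set.Ioc (0:ℝ) 1, ∑' k, F k u) =
      ∫ u in Set.Ioc (0:ℝ) 1, x * g (x * u) := by
    apply MeasureTheory.integral_congr_ae
    filter_upwards [ae_restrict_mem measurableSet_Ioc, ae_restrict_of_ae aux_ae_ne_one]
      with u hu hu1
    have hu0 : u ≠ 0 := ne_of_gt hu.1
    have hulim : u < 1 := lt_of_le_of_ne hu.2 hu1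
    have hxu : ‖x * u‖ < 1 := by
      rw [Real.norm_eq_abs, abs_mul]
      calc |x| * |u| ≤ 1 * |u| := mul_le_mul_of_nonneg_right hx (abs_nonneg u)
        _ < 1 := by rw [one_mul, abs_of_pos hu.1]; exact hulim
    have h1 := (Real.hasSum_arctan hxu).div_const u
    have heq : (fun n : ℕ => (-1) ^ n * (x * u) ^ (2 * n + 1) / ((2 * n + 1 : ℕ) : ℝ) / u)
        = fun k => F k u := by
      funext k
      rw [hF]
      have hmp : (x * u) ^ (2 * k + 1) = x ^ (2 * k + 1) * (u ^ (2 * k) * u) := by ring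
      rw [hmp]
      push_cast
      field_simp
      try ring
    rw [heq] at h1
    rw [h1.tsum_eq]
    have hxu0 : x * u ≠ 0 := mul_ne_zero hx0 hu0
    rw [hg]
    simp only [if_neg hxu0]
    field_simp
    try ring
  rw [htsum] at key
  have hval : (∫ u in Set.Ioc (0:ℝ) 1, x * g (x * u)) = ∫ w in (0:ℝ)..x, g w := by
    rw [← intervalIntegral.integral_of_le zero_le_one,
      intervalIntegral.integral_const_mul,
      intervalIntegral.integral_comp_mul_left g hx0]
    simp only [mul_zero, mul_one, smul_eq_mul]
    rw [← mul_assoc, mul_inv_cancel₀ hx0, one_mul]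
  rw [hval] at key
  have hfin : (fun k : ℕ => ∫ u in Set.Ioc (0:ℝ) 1, F k u) =
      fun k : ℕ => (-1) ^ k * x ^ (2 * k + 1) / ((2 * (k : ℝ) + 1) * (2 * (k : ℝ) + 1)) :=
    funext hint
  rwa [hfin] at key

private lemma aux_ftc (x : ℝ) :
    (∫ w in (0:ℝ)..x, 2 * Real.arctan w) = 2 * x * Real.arctan x - Real.log (1 + x ^ 2) := by
  have h : ∀ t ∈ Set.uIcc (0:ℝ) x,
      HasDerivAt (fun w => 2 * w * Real.arctan w - Real.log (1 + w ^ 2)) (2 * Real.arctan t) t := by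
    intro t _
    have hpos : (1 : ℝ) + t ^ 2 ≠ 0 := by positivity
    have h1 : HasDerivAt (fun w : ℝ => 2 * w * Real.arctan w)
        (2 * Real.arctan t + 2 * t * (1 / (1 + t ^ 2))) t := by
      have := ((hasDerivAt_id t).const_mul (2:ℝ)).mul (Real.hasDerivAt_arctan t)
      refine this.congr_deriv ?_
      simp only [id_eq]
      ring
    have h2 : HasDerivAt (fun w : ℝ => Real.log (1 + w ^ 2)) (2 * t / (1 + t ^ 2)) t := by
      have := ((hasDerivAt_pow 2 t).const_add (1:ℝ)).log hpos
      convert this using 1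
      ring
    have h3 := h1.sub h2
    refine h3.congr_deriv ?_
    ring
    try ring
  rw [intervalIntegral.integral_eq_sub_of_hasDerivAt h
    ((continuous_const.mul Real.continuous_arctan).intervalIntegrable 0 x)]
  simp

private lemma aux_piece1 {x : ℝ} (hx : |x| ≤ 1) (hx0 : x ≠ 0) :
    HasSum (fun k : ℕ => (-1) ^ k * x ^ (2 * k + 2) / (((k : ℝ) + 1) * (2 * (k : ℝ) + 1)))
      (2 * x * Real.arctan x - Real.log (1 + x ^ 2)) := by
  set F : ℕ → ℝ → ℝ := fun k u => ((-1) ^ k * 2 * x ^ (2 * k + 2) / (2 * (k : ℝ) + 1)) *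
    u ^ (2 * k + 1) with hF
  have hFint : ∀ k, Integrable (F k) (volume.restrict (Set.Ioc (0:ℝ) 1)) := fun k =>
    (Continuous.integrableOn_Ioc (by fun_prop))
  have hFsum : Summable (fun k : ℕ => ∫ u in Set.Ioc (0:ℝ) 1, ‖F k u‖) := by
    apply Summable.of_nonneg_of_le (fun k => integral_nonneg (fun u => norm_nonneg _))
      (fun k => ?_) (aux_summable.mul_left 2)
    have h1 : ∫ u in Set.Ioc (0:ℝ) 1, ‖F k u‖ ≤
        ∫ u in Set.Ioc (0:ℝ) 1, (2 / (2 * (k : ℝ) + 1)) * u ^ (2 * k + 1) := by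
      apply setIntegral_mono_on (hFint k).norm
        (Continuous.integrableOn_Ioc (by fun_prop)) measurableSet_Ioc
      intro u hu
      have hxp : |x| ^ (2 * k + 2) ≤ 1 := pow_le_one₀ (abs_nonneg x) hx
      have hnorm : ‖F k u‖ = 2 * |x| ^ (2 * k + 2) / (2 * (k : ℝ) + 1) * u ^ (2 * k + 1) := by
        rw [hF]
        simp only [norm_mul, norm_div, norm_pow, Real.norm_eq_abs]
        rw [abs_of_pos hu.1]
        have h3 : |(-1 : ℝ)| = 1 := by norm_num
        have h4 : |(2 : ℝ)| = 2 := by norm_num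
        have h2 : |2 * (k : ℝ) + 1| = 2 * (k : ℝ) + 1 := abs_of_pos (by positivity)
        rw [h3, h4, h2]; ring
      rw [hnorm]
      have hub : (0:ℝ) ≤ u ^ (2 * k + 1) := pow_nonneg hu.1.le _
      have hc : 2 * |x| ^ (2 * k + 2) / (2 * (k : ℝ) + 1) ≤ 2 / (2 * (k : ℝ) + 1) := by
        gcongr <;> first | nlinarith [hxp] | positivity
      exact mul_le_mul_of_nonneg_right hc hub
    refine h1.trans ?_
    rw [← intervalIntegral.integral_of_le zero_le_one, intervalIntegral.integral_const_mul,
      integral_pow, one_pow, zero_pow (by omega : 2 * k + 1 + 1 ≠ 0)]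
    push_cast
    rw [sub_zero, div_mul_div_comm, mul_one_div]
    rw [div_le_div_iff₀ (by positivity) (by positivity)]
    nlinarith [(Nat.cast_nonneg k : (0:ℝ) ≤ (k:ℝ))]
  have key := MeasureTheory.hasSum_integral_of_summable_integral_norm hFint hFsum
  have hint : ∀ k : ℕ, (∫ u in Set.Ioc (0:ℝ) 1, F k u) =
      (-1) ^ k * x ^ (2 * k + 2) / (((k : ℝ) + 1) * (2 * (k : ℝ) + 1)) := by
    intro k
    rw [← intervalIntegral.integral_of_le zero_le_one, hF]
    simp only []
    rw [intervalIntegral.integral_const_mul, integral_pow, one_pow,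
      zero_pow (by omega : 2 * k + 1 + 1 ≠ 0)]
    push_cast
    field_simp
    try ring
  have htsum : (∫ u in Set.Ioc (0:ℝ) 1, ∑' k, F k u) =
      ∫ u in Set.Ioc (0:ℝ) 1, 2 * x * Real.arctan (x * u) := by
    apply MeasureTheory.integral_congr_ae
    filter_upwards [ae_restrict_mem measurableSet_Ioc, ae_restrict_of_ae aux_ae_ne_one]
      with u hu hu1
    have hulim : u < 1 := lt_of_le_of_ne hu.2 hu1
    have hxu : ‖x * u‖ < 1 := by
      rw [Real.norm_eq_abs, abs_mul]
      calc |x| * |u| ≤ 1 * |u| := mul_le_mul_of_nonneg_right hx (abs_nonneg u)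
        _ < 1 := by rw [one_mul, abs_of_pos hu.1]; exact hulim
    have h1 := (Real.hasSum_arctan hxu).mul_left (2 * x)
    have heq : (fun n : ℕ => 2 * x * ((-1) ^ n * (x * u) ^ (2 * n + 1) / ((2 * n + 1 : ℕ) : ℝ)))
        = fun k => F k u := by
      funext k
      rw [hF]
      have hmp : (x * u) ^ (2 * k + 1) = x ^ (2 * k + 1) * u ^ (2 * k + 1) := mul_pow x u _
      rw [hmp]
      push_cast
      field_simp
      try ring
    rw [heq] at h1
    rw [h1.tsum_eq]
  rw [htsum] at key
  have hval : (∫ u in Set.Ioc (0:ℝ) 1, 2 * x * Real.arctan (x * u)) =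
      2 * x * Real.arctan x - Real.log (1 + x ^ 2) := by
    rw [← intervalIntegral.integral_of_le zero_le_one,
      intervalIntegral.integral_const_mul,
      intervalIntegral.integral_comp_mul_left Real.arctan hx0,
      ← aux_ftc x, intervalIntegral.integral_const_mul]
    simp only [mul_zero, mul_one, smul_eq_mul]
    field_simp
    try ring
  rw [hval] at key
  have hfin : (fun k : ℕ => ∫ u in Set.Ioc (0:ℝ) 1, F k u) =
      fun k : ℕ => (-1) ^ k * x ^ (2 * k + 2) / (((k : ℝ) + 1) * (2 * (k : ℝ) + 1)) :=
    funext hint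
  rwa [hfin] at key

/-- The power-series identity underlying (2.26): for `|x| ≤ 1` and any real `y`,
`∑_{k≥1} (−1)^(k−1) (y + 1/(2k−1)) x^(2k) / (k(2k−1))`
`  = (y − 1)(2x arctan x − log(1+x²)) + 2x ∫₀^x (arctan w)/w dw`,
the integrand being understood to take the value `1` at `w = 0`. -/
theorem sum_arctan_log_identity (y x : ℝ) (hx : |x| ≤ 1) :
    HasSum
      (fun k : ℕ => (-1) ^ k * (y + 1 / (2 * (k : ℝ) + 1)) * x ^ (2 * (k + 1)) /
        (((k : ℝ) + 1) * (2 * (k : ℝ) + 1)))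
      ((y - 1) * (2 * x * Real.arctan x - Real.log (1 + x ^ 2)) +
        2 * x * ∫ w in (0 : ℝ)..x, if w = 0 then 1 else Real.arctan w / w) := by
  rcases eq_or_ne x 0 with rfl | hx0
  · have h0 : (fun k : ℕ => (-1) ^ k * (y + 1 / (2 * (k : ℝ) + 1)) * (0:ℝ) ^ (2 * (k + 1)) /
        (((k : ℝ) + 1) * (2 * (k : ℝ) + 1))) = fun _ : ℕ => (0:ℝ) := by
      funext k
      rw [zero_pow (by omega : 2 * (k + 1) ≠ 0)]
      ring
    rw [h0]
    simpa using hasSum_zero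
  · have hA := aux_piece1 hx hx0
    have hB := aux_piece2 hx hx0
    have h := (hA.mul_left (y - 1)).add ((hB.mul_left x).mul_left 2)
    convert h using 1
    · rfl
    · funext k
      have hk1 : (2 * (k : ℝ) + 1) ≠ 0 := by positivity
      have hk2 : ((k : ℝ) + 1) ≠ 0 := by positivity
      have he : 2 * (k + 1) = 2 * k + 2 := by ring
      rw [he]
      field_simp
      ring
    · ring
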